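/- arXiv:2304.03939 — 3 statements merged into one kernel-verified Lean document; each statement's English description precedes it below -/
import Mathlib

section
/- Let d ≥ 2, let R > 0, let ε, δ > 0, and let P(x,y) = y²/2 + (δ/2)(Σ_{j=1}^d a_j x_j² − y²) where a_j > 0 and Σ a_j = 1. Suppose U solves the classical obstacle problem ΔU = χ_{U>0}, U ≥ 0 in B_R ⊂ R^{d+1} = R^d × R, and U ≤ P − ε on ∂B_R. Then U(ξ, 0) = 0 for every ξ ∈ R^d with |ξ_j| ≤ ε/(δR) for all j; in particular the contact set {U = 0} contains B_{ε/(δR)} ∩ {y = 0}. -/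
open MeasureTheory Metric Filter Topology

noncomputable section

abbrev Euc (n : ℕ) : Type := EuclideanSpace ℝ (Fin n)

def toE {n : ℕ} (f : Fin n → ℝ) : Euc n := WithLp.toLp 2 f

def SubharmonicOnSet {n : ℕ} (u : Euc n → ℝ) (s : Set (Euc n)) : Prop :=
  ContinuousOn u s ∧
    ∀ x r, 0 < r → closedBall x r ⊆ s → u x ≤ ⨍ y in ball x r, u y ∂volume

def SuperharmonicOnSet {n : ℕ} (u : Euc n → ℝ) (s : Set (Euc n)) : Prop :=
  ContinuousOn u s ∧
    ∀ x r, 0 < r → closedBall x r ⊆ s → (⨍ y in ball x r, u y ∂volume) ≤ u x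

def HarmonicOnSet {n : ℕ} (u : Euc n → ℝ) (s : Set (Euc n)) : Prop :=
  ContinuousOn u s ∧
    ∀ x r, 0 < r → closedBall x r ⊆ s → (⨍ y in ball x r, u y ∂volume) = u x

def reflLast (d : ℕ) (X : Euc (d+1)) : Euc (d+1) :=
  toE (Function.update (fun i => X i) (Fin.last d) (-(X (Fin.last d))))

def IsThinObstacleSolution (d : ℕ) (u : Euc (d+1) → ℝ) : Prop :=
  Continuous u ∧
  (∀ X : Euc (d+1), X (Fin.last d) = 0 → 0 ≤ u X) ∧
  (∀ X, u (reflLast d X) = u X) ∧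
  SuperharmonicOnSet u Set.univ ∧
  HarmonicOnSet u ({X : Euc (d+1) | X (Fin.last d) ≠ 0} ∪ {X | 0 < u X})

def contactSet (d : ℕ) (u : Euc (d+1) → ℝ) : Set (Euc (d+1)) :=
  {X | u X = 0 ∧ X (Fin.last d) = 0}

def IsObstacleSolutionOn (d : ℕ) (U : Euc (d+1) → ℝ) (s : Set (Euc (d+1))) : Prop :=
  ContinuousOn U s ∧ (∀ X ∈ s, 0 ≤ U X) ∧
  SubharmonicOnSet U s ∧
  SuperharmonicOnSet (fun X => U X - ‖X‖^2 / (2*((d:ℝ)+1))) s ∧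
  HarmonicOnSet (fun X => U X - ‖X‖^2 / (2*((d:ℝ)+1))) (s ∩ {X | 0 < U X})

def IsObstacleSolution (d : ℕ) (U : Euc (d+1) → ℝ) : Prop :=
  IsObstacleSolutionOn d U Set.univ

def QuadGrowth (d : ℕ) (u : Euc (d+1) → ℝ) : Prop :=
  ∃ C : ℝ, ∀ X : Euc (d+1), |u X| ≤ C * (‖X‖^2 + 1)

def sphereInt (d : ℕ) (u : Euc (d+1) → ℝ) (r : ℝ) : ℝ :=
  ∫ X in sphere (0 : Euc (d+1)) r, (u X)^2 ∂μH[(d : ℝ)]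

def frequency (d : ℕ) (u : Euc (d+1) → ℝ) (r : ℝ) : ℝ :=
  r * (∫ X in ball (0 : Euc (d+1)) r, ‖gradient u X‖^2 ∂volume) / sphereInt d u r

def newtonPot (d : ℕ) (A : Set (Euc (d+1))) (X : Euc (d+1)) : ℝ :=
  (1 / (((d:ℝ)+1) * ((d:ℝ)-1) * (volume (ball (0 : Euc (d+1)) 1)).toReal)) *
    ∫ Y in A, ‖X - Y‖ ^ ((1:ℝ) - (d:ℝ)) ∂volume

def thinEllipsoid (d : ℕ) (ℓ : Fin d → ℝ) : Set (Euc (d+1)) :=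
  {X : Euc (d+1) | (∑ j : Fin d, (X (Fin.castSucc j))^2 / (ℓ j)^2) ≤ 1 ∧ X (Fin.last d) = 0}

def Wlin (d : ℕ) (U : Euc (d+1) → ℝ) (X : Euc (d+1)) : ℝ :=
  U X - (X (Fin.last d))^2 / 2

def hatW (d : ℕ) (U : Euc (d+1) → ℝ) (X : Euc (d+1)) : ℝ :=
  Wlin d U X / Real.sqrt (sphereInt d (Wlin d U) 1)

def lap (d : ℕ) (φ : Euc (d+1) → ℝ) (X : Euc (d+1)) : ℝ :=
  ∑ i : Fin (d+1),
    fderiv ℝ (fun Y => fderiv ℝ φ Y (EuclideanSpace.single i 1)) X (EuclideanSpace.single i 1)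

def polyEval (d : ℕ) (p : MvPolynomial (Fin (d+1)) ℝ) (X : Euc (d+1)) : ℝ :=
  MvPolynomial.eval (fun i => X i) p


lemma integrableOn_ball_of_continuous {n : ℕ} {f : Euc n → ℝ} (hf : Continuous f)
    (x : Euc n) (r : ℝ) : IntegrableOn f (ball x r) volume :=
  ((hf.continuousOn).integrableOn_compact (isCompact_closedBall x r)).mono_set
    ball_subset_closedBall

lemma lie_setIntegral {n : ℕ} (e : Euc n ≃ₗᵢ[ℝ] Euc n) (f : Euc n → ℝ) (r : ℝ) :
    ∫ z in ball (0 : Euc n) r, f (e z) = ∫ z in ball (0 : Euc n) r, f z := by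
  have hmp := e.measurePreserving
  have hemb : MeasurableEmbedding e := e.toHomeomorph.measurableEmbedding
  have hpre : e ⁻¹' (ball (0 : Euc n) r) = ball (0 : Euc n) r := by
    ext z
    simp only [Set.mem_preimage, mem_ball, dist_eq_norm, sub_zero, e.norm_map]
  have := hmp.setIntegral_preimage_emb hemb f (ball (0 : Euc n) r)
  rw [hpre] at this
  exact this

lemma integral_coord_zero {n : ℕ} (i : Fin n) (r : ℝ) :
    ∫ z in ball (0 : Euc n) r, z i = 0 := by
  have h := lie_setIntegral (LinearIsometryEquiv.neg ℝ (E := Euc n)) (fun z => z i) r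
  simp only [LinearIsometryEquiv.coe_neg] at h
  have h2 : ∫ z in ball (0 : Euc n) r, (-z) i = - ∫ z in ball (0 : Euc n) r, z i := by
    rw [← integral_neg]; rfl
  rw [h2] at h
  linarith

lemma integral_coord_sq_eq {n : ℕ} (i k : Fin n) (r : ℝ) :
    ∫ z in ball (0 : Euc n) r, (z i)^2 = ∫ z in ball (0 : Euc n) r, (z k)^2 := by
  have h := lie_setIntegral (LinearIsometryEquiv.piLpCongrLeft 2 ℝ ℝ (Equiv.swap i k))
    (fun z => (z i)^2) r
  have h2 : ∀ z : Euc n,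
      ((LinearIsometryEquiv.piLpCongrLeft 2 ℝ ℝ (Equiv.swap i k)) z) i = z k := by
    intro z
    show z ((Equiv.swap i k).symm.symm i) = z k
    rw [Equiv.symm_symm, Equiv.swap_apply_left]
  rw [← h]
  refine setIntegral_congr_fun measurableSet_ball (fun z _ => ?_)
  rw [h2 z]

lemma integral_ball_translate {n : ℕ} (f : Euc n → ℝ) (x : Euc n) (r : ℝ) :
    ∫ y in ball x r, f y = ∫ z in ball (0 : Euc n) r, f (x + z) := by
  have hmp : MeasurePreserving (fun z : Euc n => x + z) volume volume :=
    measurePreserving_add_left volume x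
  have hemb : MeasurableEmbedding (fun z : Euc n => x + z) :=
    (Homeomorph.addLeft x).measurableEmbedding
  have hpre : (fun z : Euc n => x + z) ⁻¹' (ball x r) = ball (0 : Euc n) r := by
    ext z
    simp [mem_ball, dist_eq_norm]
  have := hmp.setIntegral_preimage_emb hemb f (ball x r)
  rw [hpre] at this
  exact this.symm

lemma quad_avg {n : ℕ} (c b : Fin n → ℝ) (e0 : ℝ) (hc : ∑ i, c i = 0)
    (x : Euc n) (r : ℝ) (hr : 0 < r) :
    ⨍ y in ball x r, (∑ i, c i * (y i)^2 + (∑ i, b i * y i + e0)) ∂volume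
      = ∑ i, c i * (x i)^2 + (∑ i, b i * x i + e0) := by
  set F : ℝ := ∑ i, c i * (x i)^2 + (∑ i, b i * x i + e0) with hF
  have hvol0 : volume (ball x r) ≠ 0 := (measure_ball_pos volume x hr).ne'
  have hvolt : volume (ball x r) ≠ ⊤ := measure_ball_lt_top.ne
  -- compute the integral over ball x r
  have key : ∫ y in ball x r, (∑ i, c i * (y i)^2 + (∑ i, b i * y i + e0))
      = F * (volume (ball x r)).toReal := by
    rw [integral_ball_translate]
    have hptwise : ∀ z : Euc n,
        (∑ i, c i * ((x + z) i)^2 + (∑ i, b i * ((x + z) i) + e0))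
        = (∑ i, c i * (z i)^2) + ((∑ i, (2 * c i * x i + b i) * z i) + F) := by
      intro z
      have happ : ∀ i, (x + z) i = x i + z i := fun i => rfl
      simp only [happ, hF]
      have A : ∑ i, c i * (x i + z i)^2
          = (∑ i, c i * (z i)^2) + ((∑ i, (2*c i*x i) * z i) + ∑ i, c i * (x i)^2) := by
        rw [← Finset.sum_add_distrib, ← Finset.sum_add_distrib]
        exact Finset.sum_congr rfl (fun i _ => by ring)
      have B : ∑ i, b i * (x i + z i) = (∑ i, b i * z i) + ∑ i, b i * x i := by
        rw [← Finset.sum_add_distrib]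
        exact Finset.sum_congr rfl (fun i _ => by ring)
      have C : ∑ i, (2*c i*x i + b i) * z i
          = (∑ i, (2*c i*x i) * z i) + ∑ i, b i * z i := by
        rw [← Finset.sum_add_distrib]
        exact Finset.sum_congr rfl (fun i _ => by ring)
      rw [A, B, C]
      ring
    rw [setIntegral_congr_fun measurableSet_ball (fun z _ => hptwise z)]
    have i1 : IntegrableOn (fun z : Euc n => ∑ i, c i * (z i)^2) (ball 0 r) volume :=
      integrableOn_ball_of_continuous
        (continuous_finset_sum _ fun i _ => continuous_const.mul ((PiLp.continuous_apply (p := 2) (β := fun _ => ℝ) i).pow 2)) 0 r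
    have i2 : IntegrableOn (fun z : Euc n => ∑ i, (2 * c i * x i + b i) * z i) (ball 0 r) volume :=
      integrableOn_ball_of_continuous
        (continuous_finset_sum _ fun i _ => continuous_const.mul (PiLp.continuous_apply (p := 2) (β := fun _ => ℝ) i)) 0 r
    have i3 : IntegrableOn (fun _ : Euc n => F) (ball 0 r) volume :=
      integrableOn_ball_of_continuous continuous_const 0 r
    have i23 : IntegrableOn (fun z : Euc n => (∑ i, (2 * c i * x i + b i) * z i) + F)
        (ball 0 r) volume := i2.add i3
    rw [integral_add i1 i23, integral_add i2 i3]
    have e1 : ∫ z in ball (0 : Euc n) r, (∑ i, c i * (z i)^2) = 0 := by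
      rw [integral_finset_sum]
      · rcases isEmpty_or_nonempty (Fin n) with h | h
        · simp
        · obtain ⟨i0⟩ := h
          have : ∀ i : Fin n, ∫ z in ball (0 : Euc n) r, c i * (z i)^2
              = c i * ∫ z in ball (0 : Euc n) r, (z i0)^2 := by
            intro i
            rw [integral_const_mul, integral_coord_sq_eq i i0]
          rw [Finset.sum_congr rfl (fun i _ => this i), ← Finset.sum_mul, hc, zero_mul]
      · intro i _
        exact integrableOn_ball_of_continuous
          (continuous_const.mul ((PiLp.continuous_apply (p := 2) (β := fun _ => ℝ) i).pow 2)) 0 r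
    have e2 : ∫ z in ball (0 : Euc n) r, (∑ i, (2 * c i * x i + b i) * z i) = 0 := by
      rw [integral_finset_sum]
      · refine Finset.sum_eq_zero (fun i _ => ?_)
        rw [integral_const_mul, integral_coord_zero, mul_zero]
      · intro i _
        exact integrableOn_ball_of_continuous
          (continuous_const.mul (PiLp.continuous_apply (p := 2) (β := fun _ => ℝ) i)) 0 r
    rw [e1, e2]
    have hvol : volume (ball x r) = volume (ball (0 : Euc n) r) := by
      simp [Measure.addHaar_ball_center]
    rw [setIntegral_const, hvol]
    simp [mul_comm, measureReal_def]
  have hne : (volume (ball x r)).toReal ≠ 0 := ENNReal.toReal_ne_zero.mpr ⟨hvol0, hvolt⟩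
  rw [setAverage_eq, key, smul_eq_mul, mul_comm F, ← mul_assoc, measureReal_def, inv_mul_cancel₀ hne, one_mul]

lemma mvp_max {n : ℕ} {Ω K : Set (Euc n)} (hΩ : IsOpen Ω) (hK : IsCompact K)
    (hKcl : IsClosed K) (hΩK : Ω ⊆ K) (hne : K.Nonempty) (hne' : Ωᶜ.Nonempty)
    {W : Euc n → ℝ} (hWc : ContinuousOn W K)
    (hmvp : ∀ x r, 0 < r → closedBall x r ⊆ Ω → (⨍ y in ball x r, W y ∂volume) = W x)
    (hbd : ∀ x ∈ K \ Ω, W x ≤ 0) :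
    ∀ x ∈ K, W x ≤ 0 := by
  obtain ⟨x0, hx0K, hmax⟩ := hK.exists_isMaxOn hne hWc
  suffices h : W x0 ≤ 0 by
    intro x hx; exact le_trans (hmax hx) h
  by_cases hx0 : x0 ∈ Ω
  swap
  · exact hbd x0 ⟨hx0K, hx0⟩
  set M := W x0 with hM
  set ρ := infDist x0 Ωᶜ with hρdef
  have hρ : 0 < ρ :=
    (hΩ.isClosed_compl.notMem_iff_infDist_pos hne').mp (by simpa using hx0)
  have hballΩ : ball x0 ρ ⊆ Ω := by
    intro y hy
    by_contra hyc
    have h1 : infDist x0 Ωᶜ ≤ dist x0 y := infDist_le_dist_of_mem (show y ∈ Ωᶜ from hyc)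
    rw [dist_comm] at h1
    exact absurd (lt_of_le_of_lt h1 (mem_ball.mp hy)) (lt_irrefl _)
  -- W = M on ball x0 ρ
  have hconst : ∀ y ∈ ball x0 ρ, W y = M := by
    intro y hy
    have hdy : dist y x0 < ρ := mem_ball.mp hy
    set r : ℝ := (dist y x0 + ρ) / 2 with hrdef
    have hd0 : (0:ℝ) ≤ dist y x0 := dist_nonneg
    have hr0 : 0 < r := by rw [hrdef]; linarith
    have hrρ : r < ρ := by rw [hrdef]; linarith
    have hcb : closedBall x0 r ⊆ Ω := (closedBall_subset_ball hrρ).trans hballΩ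
    have hyr : y ∈ ball x0 r := by rw [mem_ball, hrdef]; linarith
    have havg : (⨍ z in ball x0 r, W z ∂volume) = M := hmvp x0 r hr0 hcb
    have hint : IntegrableOn W (ball x0 r) volume :=
      ((hWc.mono (hcb.trans hΩK)).integrableOn_compact (isCompact_closedBall x0 r)).mono_set
        ball_subset_closedBall
    have hvol0 : volume (ball x0 r) ≠ 0 := (measure_ball_pos volume x0 hr0).ne'
    have hvolt : volume (ball x0 r) ≠ ⊤ := measure_ball_lt_top.ne
    have hne2 : (volume (ball x0 r)).toReal ≠ 0 := ENNReal.toReal_ne_zero.mpr ⟨hvol0, hvolt⟩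
    have hWle : ∀ z ∈ ball x0 r, W z ≤ M :=
      fun z hz => hmax (hΩK (hcb (ball_subset_closedBall hz)))
    have hIW : ∫ z in ball x0 r, W z = M * (volume (ball x0 r)).toReal := by
      rw [setAverage_eq, smul_eq_mul, measureReal_def] at havg
      field_simp at havg
      linarith [havg]
    have hconstInt : IntegrableOn (fun _ : Euc n => M) (ball x0 r) volume :=
      integrableOn_const measure_ball_lt_top.ne
    have hzero : ∫ z in ball x0 r, (M - W z) = 0 := by
      rw [integral_sub hconstInt hint, setIntegral_const, smul_eq_mul, hIW, measureReal_def]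
      ring
    have hnn : 0 ≤ᵐ[volume.restrict (ball x0 r)] fun z => M - W z :=
      (ae_restrict_iff' measurableSet_ball).mpr
        (ae_of_all _ (fun z hz => sub_nonneg.mpr (hWle z hz)))
    have hae : (fun z => M - W z) =ᵐ[volume.restrict (ball x0 r)] 0 :=
      (integral_eq_zero_iff_of_nonneg_ae hnn (hconstInt.sub hint)).mp hzero
    -- conclude W y = M
    by_contra hWy
    have hylt : W y < M :=
      lt_of_le_of_ne (hmax (hΩK (hballΩ hy))) hWy
    have hcont : ContinuousAt W y :=
      hWc.continuousAt (mem_nhds_iff.mpr ⟨Ω, hΩK, hΩ, hballΩ hy⟩)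
    have hnbhd : {z | W z < M} ∩ ball x0 r ∈ 𝓝 y :=
      Filter.inter_mem (hcont.preimage_mem_nhds (Iio_mem_nhds hylt))
        (isOpen_ball.mem_nhds hyr)
    obtain ⟨s, hs0, hssub⟩ := Metric.mem_nhds_iff.mp hnbhd
    have hnull : volume.restrict (ball x0 r) {z | ¬ (M - W z = 0)} = 0 := by
      have := hae
      rw [EventuallyEq, ae_iff] at this
      simpa using this
    have hsub2 : ball y s ⊆ {z | ¬ (M - W z = 0)} := by
      intro z hz
      have := (hssub hz).1
      simp only [Set.mem_setOf_eq] at this ⊢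
      intro h0
      linarith
    have h0 : volume.restrict (ball x0 r) (ball y s) = 0 :=
      measure_mono_null hsub2 hnull
    rw [Measure.restrict_apply' measurableSet_ball,
      Set.inter_eq_self_of_subset_left (fun z hz => (hssub hz).2)] at h0
    exact absurd h0 (measure_ball_pos volume y hs0).ne'
  -- find boundary point of Ω at distance ρ
  obtain ⟨z, hzΩc, hzd⟩ := hΩ.isClosed_compl.exists_infDist_eq_dist hne' x0
  have hzcl : z ∈ closure (ball x0 ρ) := by
    rw [closure_ball x0 hρ.ne', mem_closedBall, dist_comm]
    exact le_of_eq hzd.symm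
  have hzK : z ∈ K := by
    have : closure (ball x0 ρ) ⊆ closure K := closure_mono (hballΩ.trans hΩK)
    rw [hKcl.closure_eq] at this
    exact this hzcl
  have hWz : W z = M := by
    have h1 : ContinuousWithinAt W (ball x0 ρ) z := (hWc z hzK).mono (hballΩ.trans hΩK)
    have hnb : (𝓝[ball x0 ρ] z).NeBot := mem_closure_iff_nhdsWithin_neBot.mp hzcl
    have hev : (fun _ : Euc n => M) =ᶠ[𝓝[ball x0 ρ] z] W :=
      eventually_nhdsWithin_of_forall (fun w hw => (hconst w hw).symm)
    exact tendsto_nhds_unique h1 (Tendsto.congr' hev tendsto_const_nhds)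
  have := hbd z ⟨hzK, hzΩc⟩
  rw [hWz] at this
  exact this

lemma norm_sq_euc {n : ℕ} (x : Euc n) : ‖x‖^2 = ∑ i, (x i)^2 := by
  rw [EuclideanSpace.norm_eq, Real.sq_sqrt (by positivity)]
  simp [sq_abs]

lemma coord_abs_le_norm {n : ℕ} (x : Euc n) (i : Fin n) : |x i| ≤ ‖x‖ := by
  have h1 : (x i)^2 ≤ ‖x‖^2 := by
    rw [norm_sq_euc]
    exact Finset.single_le_sum (f := fun j => (x j)^2) (fun j _ => sq_nonneg _)
      (Finset.mem_univ i)
  have := Real.sqrt_le_sqrt h1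
  rwa [Real.sqrt_sq_eq_abs, Real.sqrt_sq (norm_nonneg x)] at this

lemma nonneg_closure {n : ℕ} {U : Euc n → ℝ} {R : ℝ} (hR : 0 < R)
    (hUc : ContinuousOn U (closedBall (0 : Euc n) R))
    (h : ∀ X ∈ ball (0 : Euc n) R, 0 ≤ U X) :
    ∀ X ∈ closedBall (0 : Euc n) R, 0 ≤ U X := by
  intro X hX
  have hXcl : X ∈ closure (ball (0 : Euc n) R) := by
    rwa [closure_ball (0 : Euc n) hR.ne']
  have hcw : ContinuousWithinAt U (ball (0 : Euc n) R) X :=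
    (hUc X hX).mono ball_subset_closedBall
  have hnb : (𝓝[ball (0 : Euc n) R] X).NeBot := mem_closure_iff_nhdsWithin_neBot.mp hXcl
  exact ge_of_tendsto hcw (eventually_nhdsWithin_of_forall h)

set_option maxHeartbeats 2000000 in
theorem nondegeneracy_lemma (d : ℕ) (hd : 2 ≤ d) (R ε δ : ℝ)
    (hR : 0 < R) (hε : 0 < ε) (hδ : 0 < δ)
    (a : Fin d → ℝ) (ha : ∀ j, 0 < a j) (hsum : ∑ j, a j = 1)
    (U : Euc (d+1) → ℝ)
    (hUc : ContinuousOn U (closedBall 0 R))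
    (hU : IsObstacleSolutionOn d U (ball 0 R))
    (hbdry : ∀ X ∈ sphere (0 : Euc (d+1)) R,
      U X ≤ (X (Fin.last d))^2 / 2
        + δ / 2 * ((∑ j : Fin d, a j * (X (Fin.castSucc j))^2) - (X (Fin.last d))^2) - ε) :
    ∀ ξ : Fin d → ℝ, (∀ j, |ξ j| ≤ ε / (δ * R)) → U (toE (Fin.snoc ξ 0)) = 0 := by
  intro ξ hξ
  obtain ⟨hUcb, hUnn, hUsub, hUsup, hUharm⟩ := hU
  have hd1 : (0:ℝ) < (d:ℝ) + 1 := by positivity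
  -- nonnegativity on the closed ball
  have hUnn' : ∀ X ∈ closedBall (0 : Euc (d+1)) R, 0 ≤ U X := nonneg_closure hR hUc hUnn
  -- test with coordinate vectors on the sphere
  have hsphere_single : ∀ i : Fin (d+1), EuclideanSpace.single i R ∈ sphere (0 : Euc (d+1)) R := by
    intro i
    rw [mem_sphere_zero_iff_norm, EuclideanSpace.norm_single, Real.norm_eq_abs, abs_of_pos hR]
  -- δ < 1
  have hδ1 : δ < 1 := by
    have h1 := hbdry _ (hsphere_single (Fin.last d))
    have h2 := hUnn' _ (sphere_subset_closedBall (hsphere_single (Fin.last d)))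
    rw [EuclideanSpace.single_apply] at h1
    simp only [if_pos rfl] at h1
    have hz : ∀ j : Fin d, (EuclideanSpace.single (Fin.last d) R : Euc (d+1)) (Fin.castSucc j) = 0 := by
      intro j
      rw [EuclideanSpace.single_apply, if_neg (Fin.castSucc_lt_last j).ne]
    rw [Finset.sum_congr rfl (fun j _ => by rw [hz j])] at h1
    simp at h1
    nlinarith [mul_pos hR hR]
  -- ε ≤ δ * a j * R^2 / 2, hence |ξ j| ≤ a j * R / 2
  have hξb : ∀ j : Fin d, |ξ j| ≤ a j * R / 2 := by
    intro j
    have h1 := hbdry _ (hsphere_single (Fin.castSucc j))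
    have h2 := hUnn' _ (sphere_subset_closedBall (hsphere_single (Fin.castSucc j)))
    have hlast : (EuclideanSpace.single (Fin.castSucc j) R : Euc (d+1)) (Fin.last d) = 0 := by
      rw [EuclideanSpace.single_apply, if_neg (Fin.castSucc_lt_last j).ne']
    have hsum1 : (∑ j' : Fin d, a j' *
        ((EuclideanSpace.single (Fin.castSucc j) R : Euc (d+1)) (Fin.castSucc j'))^2)
        = a j * R^2 := by
      have hterm : ∀ j' : Fin d, a j' *
          ((EuclideanSpace.single (Fin.castSucc j) R : Euc (d+1)) (Fin.castSucc j'))^2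
          = if j' = j then a j' * R^2 else 0 := by
        intro j'
        rw [EuclideanSpace.single_apply]
        by_cases h : j' = j
        · subst h; simp
        · rw [if_neg (by simpa [Fin.castSucc_inj] using h), if_neg h]; ring
      rw [Finset.sum_congr rfl (fun j' _ => hterm j')]
      simp
    rw [hlast, hsum1] at h1
    have hεj : ε ≤ δ * a j * R^2 / 2 := by nlinarith
    refine (hξ j).trans ?_
    rw [div_le_iff₀ (by positivity)]
    nlinarith [ha j]
  -- the comparison polynomial Q centered at ξ
  set Q : Euc (d+1) → ℝ := fun X => (X (Fin.last d))^2/2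
    + δ/2 * ((∑ j : Fin d, a j * (X (Fin.castSucc j) - ξ j)^2) - (X (Fin.last d))^2) with hQdef
  have contQ : Continuous Q := by
    apply Continuous.add
    · exact ((PiLp.continuous_apply (p := 2) (β := fun _ => ℝ) (Fin.last d)).pow 2).div_const 2
    · exact continuous_const.mul ((continuous_finset_sum _ fun j _ =>
        continuous_const.mul (((PiLp.continuous_apply (p := 2) (β := fun _ => ℝ) (Fin.castSucc j)).sub continuous_const).pow 2)).sub
        ((PiLp.continuous_apply (p := 2) (β := fun _ => ℝ) (Fin.last d)).pow 2))
  have hQnn : ∀ X, 0 ≤ Q X := by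
    intro X
    have hs : 0 ≤ ∑ j : Fin d, a j * (X (Fin.castSucc j) - ξ j)^2 :=
      Finset.sum_nonneg (fun j _ => mul_nonneg (ha j).le (sq_nonneg _))
    have := sq_nonneg (X (Fin.last d))
    rw [hQdef]
    nlinarith
  -- normal form of Q - ‖·‖²/(2(d+1))
  set κ : ℝ := 1 / (2*((d:ℝ)+1)) with hκdef
  set c : Fin (d+1) → ℝ := Fin.snoc (fun j => δ/2 * a j - κ) ((1-δ)/2 - κ) with hcdef
  set b : Fin (d+1) → ℝ := Fin.snoc (fun j => -(δ * a j * ξ j)) 0 with hbdef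
  set e0 : ℝ := δ/2 * ∑ j : Fin d, a j * (ξ j)^2 with he0def
  have hcsum : ∑ i, c i = 0 := by
    rw [Fin.sum_univ_castSucc]
    simp only [hcdef, Fin.snoc_castSucc, Fin.snoc_last]
    rw [Finset.sum_sub_distrib, ← Finset.mul_sum, hsum, Finset.sum_const, Finset.card_univ,
      Fintype.card_fin, hκdef]
    have hd0 : ((d:ℝ)+1) ≠ 0 := by positivity
    rw [nsmul_eq_mul]
    field_simp
    ring
  have hqform : ∀ Y : Euc (d+1),
      Q Y - ‖Y‖^2 / (2*((d:ℝ)+1)) = ∑ i, c i * (Y i)^2 + (∑ i, b i * Y i + e0) := by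
    intro Y
    have hnorm : ‖Y‖^2 = (∑ j : Fin d, (Y (Fin.castSucc j))^2) + (Y (Fin.last d))^2 := by
      rw [norm_sq_euc, Fin.sum_univ_castSucc]
    have hS1 : ∑ j : Fin d, a j * (Y (Fin.castSucc j) - ξ j)^2
        = (∑ j : Fin d, a j * (Y (Fin.castSucc j))^2)
          - 2 * (∑ j : Fin d, a j * ξ j * Y (Fin.castSucc j))
          + ∑ j : Fin d, a j * (ξ j)^2 := by
      rw [Finset.sum_congr rfl (fun j (_ : j ∈ Finset.univ) => (by ring :
        a j * (Y (Fin.castSucc j) - ξ j)^2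
          = (a j * (Y (Fin.castSucc j))^2 - 2 * (a j * ξ j * Y (Fin.castSucc j)))
            + a j * (ξ j)^2)), Finset.sum_add_distrib, Finset.sum_sub_distrib, ← Finset.mul_sum]
    have hA : ∑ j : Fin d, (δ/2 * a j - κ) * (Y (Fin.castSucc j))^2
        = δ/2 * (∑ j : Fin d, a j * (Y (Fin.castSucc j))^2)
          - κ * ∑ j : Fin d, (Y (Fin.castSucc j))^2 := by
      rw [Finset.mul_sum, Finset.mul_sum, ← Finset.sum_sub_distrib]
      exact Finset.sum_congr rfl (fun j _ => by ring)
    have hB : ∑ j : Fin d, -(δ * a j * ξ j) * Y (Fin.castSucc j)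
        = -(δ * ∑ j : Fin d, a j * ξ j * Y (Fin.castSucc j)) := by
      rw [Finset.mul_sum, ← Finset.sum_neg_distrib]
      exact Finset.sum_congr rfl (fun j _ => by ring)
    rw [Fin.sum_univ_castSucc (f := fun i => c i * (Y i)^2),
      Fin.sum_univ_castSucc (f := fun i => b i * Y i)]
    simp only [hcdef, hbdef, Fin.snoc_castSucc, Fin.snoc_last]
    simp only [hQdef]
    rw [hA, hB, hnorm, hS1, he0def, hκdef]
    have hd0 : (2*((d:ℝ)+1)) ≠ 0 := by positivity
    field_simp
    ring
  -- mean value property of W := U - Q on Ω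
  set nsq : Euc (d+1) → ℝ := fun X => ‖X‖^2 / (2*((d:ℝ)+1)) with hnsqdef
  have contnsq : Continuous nsq := ((continuous_norm.pow 2)).div_const _
  set Ω : Set (Euc (d+1)) := ball 0 R ∩ {X | 0 < U X} with hΩdef
  have hΩopen : IsOpen Ω := hUcb.isOpen_inter_preimage isOpen_ball isOpen_Ioi
  have hΩball : Ω ⊆ ball 0 R := Set.inter_subset_left
  have hmvpW : ∀ x r, 0 < r → closedBall x r ⊆ Ω →
      (⨍ y in ball x r, (U y - Q y) ∂volume) = U x - Q x := by
    intro x r hr hsub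
    have hsubB : closedBall x r ⊆ ball 0 R := hsub.trans hΩball
    have h1 : (⨍ y in ball x r, (U y - nsq y) ∂volume) = U x - nsq x :=
      hUharm.2 x r hr hsub
    have h2 : (⨍ y in ball x r, (Q y - nsq y) ∂volume) = Q x - nsq x := by
      have := quad_avg c b e0 hcsum x r hr
      rw [setAverage_eq] at this ⊢
      rw [setIntegral_congr_fun measurableSet_ball
        (fun y (_ : y ∈ ball x r) => (hqform y))]
      rw [this, hqform x]
    have int1 : IntegrableOn (fun y => U y - nsq y) (ball x r) volume := by
      have : ContinuousOn (fun y => U y - nsq y) (closedBall x r) :=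
        (hUcb.mono hsubB).sub contnsq.continuousOn
      exact (this.integrableOn_compact (isCompact_closedBall x r)).mono_set
        ball_subset_closedBall
    have int2 : IntegrableOn (fun y => Q y - nsq y) (ball x r) volume :=
      (((contQ.sub contnsq).continuousOn).integrableOn_compact
        (isCompact_closedBall x r)).mono_set ball_subset_closedBall
    have hvol0 : volume (ball x r) ≠ 0 := (measure_ball_pos volume x hr).ne'
    have hvolt : volume (ball x r) ≠ ⊤ := measure_ball_lt_top.ne
    have key : (⨍ y in ball x r, (U y - Q y) ∂volume)
        = (⨍ y in ball x r, (U y - nsq y) ∂volume)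
          - ⨍ y in ball x r, (Q y - nsq y) ∂volume := by
      rw [setAverage_eq, setAverage_eq, setAverage_eq, smul_eq_mul, smul_eq_mul, smul_eq_mul,
        ← mul_sub, ← integral_sub int1 int2]
      congr 1
      exact setIntegral_congr_fun measurableSet_ball (fun y _ => by ring)
    rw [key, h1, h2]
    ring
  -- apply the maximum principle
  have hmain : ∀ X ∈ closedBall (0 : Euc (d+1)) R, U X - Q X ≤ 0 := by
    refine mvp_max hΩopen (isCompact_closedBall 0 R) isClosed_closedBall
      (hΩball.trans ball_subset_closedBall) ⟨0, mem_closedBall_self hR.le⟩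
      ⟨EuclideanSpace.single (Fin.last d) R, ?_⟩ (hUc.sub contQ.continuousOn) hmvpW ?_
    · intro hmem
      have := hΩball hmem
      rw [mem_ball_zero_iff, EuclideanSpace.norm_single, Real.norm_eq_abs,
        abs_of_pos hR] at this
      exact lt_irrefl R this
    · intro X hX
      obtain ⟨hXcb, hXΩ⟩ := hX
      by_cases hXb : X ∈ ball (0 : Euc (d+1)) R
      · -- interior point with U X = 0
        have hUX : U X = 0 := by
          have h1 := hUnn X hXb
          have h2 : ¬ 0 < U X := fun h => hXΩ ⟨hXb, h⟩
          exact le_antisymm (not_lt.mp h2) h1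
        rw [hUX]
        simpa using hQnn X
      · -- sphere point
        have hXs : X ∈ sphere (0 : Euc (d+1)) R := by
          rw [mem_sphere_zero_iff_norm]
          rw [mem_closedBall_zero_iff] at hXcb
          rw [mem_ball_zero_iff] at hXb
          exact le_antisymm hXcb (not_lt.mp hXb)
        have h1 := hbdry X hXs
        have hXnorm : ‖X‖ = R := mem_sphere_zero_iff_norm.mp hXs
        -- P - ε ≤ Q on the sphere
        have hcoord : ∀ j : Fin d, |X (Fin.castSucc j)| ≤ R := by
          intro j
          rw [← hXnorm]
          exact coord_abs_le_norm X (Fin.castSucc j)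
        have hterm : ∀ j : Fin d, a j * (X (Fin.castSucc j))^2
            - a j * (X (Fin.castSucc j) - ξ j)^2 ≤ 2 * a j * (ε/(δ*R)) * R := by
          intro j
          have h2 : |ξ j| ≤ ε/(δ*R) := hξ j
          have h3 : |X (Fin.castSucc j)| ≤ R := hcoord j
          have hprod : ξ j * X (Fin.castSucc j) ≤ (ε/(δ*R)) * R := by
            calc ξ j * X (Fin.castSucc j) ≤ |ξ j * X (Fin.castSucc j)| := le_abs_self _
              _ = |ξ j| * |X (Fin.castSucc j)| := abs_mul _ _
              _ ≤ (ε/(δ*R)) * R :=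
                mul_le_mul h2 h3 (abs_nonneg _) (by positivity)
          nlinarith [ha j, sq_nonneg (ξ j)]
        have hsum2 : (∑ j : Fin d, a j * (X (Fin.castSucc j))^2)
            - (∑ j : Fin d, a j * (X (Fin.castSucc j) - ξ j)^2) ≤ 2 * ε / δ := by
          rw [← Finset.sum_sub_distrib]
          calc (∑ j : Fin d, (a j * (X (Fin.castSucc j))^2
                - a j * (X (Fin.castSucc j) - ξ j)^2))
              ≤ ∑ j : Fin d, 2 * a j * (ε/(δ*R)) * R :=
                Finset.sum_le_sum (fun j _ => hterm j)
            _ = (2 * (ε/(δ*R)) * R) * ∑ j : Fin d, a j := by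
                rw [Finset.mul_sum]
                exact Finset.sum_congr rfl (fun j _ => by ring)
            _ = 2 * ε / δ := by
                rw [hsum, mul_one]
                field_simp
        have hkey : δ/2 * ((∑ j : Fin d, a j * (X (Fin.castSucc j))^2)
            - (∑ j : Fin d, a j * (X (Fin.castSucc j) - ξ j)^2)) ≤ ε := by
          have h3 := mul_le_mul_of_nonneg_left hsum2 (le_of_lt (half_pos hδ))
          have h4 : δ/2 * (2 * ε / δ) = ε := by field_simp
          linarith
        rw [hQdef]
        simp only
        linarith
  -- conclude at the point (ξ, 0)
  set Z : Euc (d+1) := toE (Fin.snoc ξ 0) with hZdef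
  have hZc : ∀ j : Fin d, Z (Fin.castSucc j) = ξ j := by
    intro j
    simp only [hZdef, toE]
    simp
  have hZl : Z (Fin.last d) = 0 := by
    simp only [hZdef, toE]
    simp
  have hZnorm : ‖Z‖^2 ≤ R^2/4 := by
    rw [norm_sq_euc, Fin.sum_univ_castSucc]
    have hj : ∀ j : Fin d, (Z (Fin.castSucc j))^2 ≤ a j * R^2/4 := by
      intro j
      have h1 : |ξ j| ≤ a j * R / 2 := hξb j
      have h2 : a j ≤ 1 := by
        rw [← hsum]
        exact Finset.single_le_sum (f := fun j => a j) (fun j _ => (ha j).le)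
          (Finset.mem_univ j)
      rw [hZc j]
      nlinarith [abs_nonneg (ξ j), sq_abs (ξ j), ha j]
    calc (∑ j : Fin d, (Z (Fin.castSucc j))^2) + (Z (Fin.last d))^2
        ≤ (∑ j : Fin d, a j * R^2/4) + 0 := by
          rw [hZl]
          have := Finset.sum_le_sum (fun j (_ : j ∈ Finset.univ) => hj j)
          simp only [ne_eq, OfNat.ofNat_ne_zero, not_false_eq_true, zero_pow, add_zero]
          linarith
      _ = R^2/4 := by
          rw [add_zero, ← Finset.sum_div, ← Finset.sum_mul, hsum, one_mul]
  have hZball : Z ∈ ball (0 : Euc (d+1)) R := by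
    rw [mem_ball_zero_iff]
    nlinarith [norm_nonneg Z, hR]
  have hQZ : Q Z = 0 := by
    rw [hQdef]
    simp only
    rw [hZl, Finset.sum_congr rfl (fun j _ => by rw [hZc j])]
    simp
  have h1 := hmain Z (ball_subset_closedBall hZball)
  have h2 := hUnn Z hZball
  rw [hQZ] at h1
  linarith
end
end

section
/- Let P(x,y) = (1/2)Σ_{j=1}^d a_j x_j² − (1/2)y² with a_j > 0 and Σ a_j = 1, and for n ∈ N, n > 1, let U_n be a global solution of the classical obstacle problem in R^{d+1} of the form U_n = (1/2)y² + (1/n)P − 1/n + V_n, where V_n is the Newtonian potential of the contact set E_n = {U_n = 0}, an ellipsoid symmetric with respect to all coordinate hyperplanes. Then E_n ⊂ {|y| ≤ 2/√n}, and there exists R_0 depending only on (a_j) such that E_n ⊂ B_{R_0} and E_n ⊇ B_{1/(8R_0)} ∩ {y = 0}. -/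
open MeasureTheory Metric Filter Topology

set_option maxHeartbeats 1000000

noncomputable section

/-! ### Auxiliary lemmas -/

section Aux

lemma transl_int {m : ℕ} (f : Euc m → ℝ) (x : Euc m) (r : ℝ) :
    ∫ Y in ball x r, f Y ∂volume = ∫ z in ball (0:Euc m) r, f (x + z) ∂volume := by
  have hmp : MeasurePreserving (fun z : Euc m => x + z) volume volume :=
    measurePreserving_add_left volume x
  have hemb : MeasurableEmbedding (fun z : Euc m => x + z) :=
    (Homeomorph.addLeft x).measurableEmbedding
  have hpre : (fun z : Euc m => x + z) ⁻¹' (ball x r) = ball (0:Euc m) r := by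
    ext z
    simp [mem_ball, dist_eq_norm]
  rw [← hmp.setIntegral_preimage_emb hemb, hpre]

lemma neg_int_coord {m : ℕ} (i : Fin m) (r : ℝ) :
    ∫ z in ball (0:Euc m) r, (z i) ∂volume = 0 := by
  have hmp : MeasurePreserving (fun z : Euc m => -z) volume volume :=
    Measure.measurePreserving_neg volume
  have hemb : MeasurableEmbedding (fun z : Euc m => -z) :=
    (Homeomorph.neg (Euc m)).measurableEmbedding
  have hpre : (fun z : Euc m => -z) ⁻¹' (ball (0:Euc m) r) = ball 0 r := by
    ext z; simp [mem_ball, dist_eq_norm]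
  have h := hmp.setIntegral_preimage_emb hemb (fun z : Euc m => z i) (ball (0:Euc m) r)
  rw [hpre] at h
  have h2 : ∫ z in ball (0:Euc m) r, ((-z) i) ∂volume = ∫ z in ball (0:Euc m) r, (z i) ∂volume := h
  have h3 : ∫ z in ball (0:Euc m) r, ((-z) i) ∂volume
      = - ∫ z in ball (0:Euc m) r, (z i) ∂volume := by
    rw [← integral_neg]
    congr 1
  linarith [h2, h3]

lemma swap_int_sq {m : ℕ} (i j : Fin m) (r : ℝ) :
    ∫ z in ball (0:Euc m) r, (z i)^2 ∂volume = ∫ z in ball (0:Euc m) r, (z j)^2 ∂volume := by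
  classical
  set e : Euc m ≃ₗᵢ[ℝ] Euc m := LinearIsometryEquiv.piLpCongrLeft 2 ℝ ℝ (Equiv.swap i j) with he
  have hmp : MeasurePreserving (⇑e) volume volume := e.measurePreserving
  have hemb : MeasurableEmbedding (⇑e) := e.toHomeomorph.measurableEmbedding
  have hpre : (⇑e) ⁻¹' (ball (0:Euc m) r) = ball (0:Euc m) r := by
    ext z
    simp only [Set.mem_preimage, mem_ball_zero_iff, e.norm_map]
  have h := hmp.setIntegral_preimage_emb hemb (fun z : Euc m => (z i)^2) (ball (0:Euc m) r)
  rw [hpre] at h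
  have happ : ∀ z : Euc m, (e z) i = z j := by
    intro z
    rw [he]
    rw [LinearIsometryEquiv.piLpCongrLeft_apply]
    simp only [Equiv.piCongrLeft'_apply]
    rw [Equiv.symm_swap, Equiv.swap_apply_left]
  calc ∫ z in ball (0:Euc m) r, (z i)^2 ∂volume
      = ∫ z in ball (0:Euc m) r, ((e z) i)^2 ∂volume := h.symm
    _ = ∫ z in ball (0:Euc m) r, (z j)^2 ∂volume := by
        congr 1; ext z; rw [happ]

lemma cont_coord {m : ℕ} (i : Fin m) : Continuous fun z : Euc m => z i :=
  (EuclideanSpace.proj i).continuous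

lemma integrableOn_ball_cont {m : ℕ} {g : Euc m → ℝ} (hg : Continuous g) (x : Euc m) (r : ℝ) :
    IntegrableOn g (ball x r) volume :=
  (hg.continuousOn.integrableOn_compact (isCompact_closedBall x r)).mono_set
    ball_subset_closedBall

lemma setIntegral_poly {m : ℕ} (i₀ : Fin m) (α β : Fin m → ℝ) (γ : ℝ)
    (hα : ∑ i, α i = 0) (x : Euc m) (r : ℝ) :
    ∫ Y in ball x r, ((∑ i, (α i * (Y i)^2 + β i * (Y i))) + γ) ∂volume
      = ((∑ i, (α i * (x i)^2 + β i * (x i))) + γ) * (volume (ball x r)).toReal := by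
  set A : ℝ := (∑ i, (α i * (x i)^2 + β i * (x i))) + γ with hA
  rw [transl_int]
  have hpt : ∀ z : Euc m,
      ((∑ i, (α i * ((x + z) i)^2 + β i * ((x + z) i))) + γ)
        = A + ((∑ i, (2 * α i * x i + β i) * z i) + (∑ i, α i * (z i)^2)) := by
    intro z
    have h1 : ∀ i : Fin m, (x + z) i = x i + z i := fun i => rfl
    have h2 : ∀ i : Fin m, α i * ((x + z) i)^2 + β i * ((x + z) i)
        = (α i * (x i)^2 + β i * (x i)) + ((2 * α i * x i + β i) * z i + α i * (z i)^2) := by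
      intro i; rw [h1]; ring
    rw [Finset.sum_congr rfl (fun i _ => h2 i), hA]
    simp only [Finset.sum_add_distrib]
    ring
  rw [show (fun z : Euc m => (∑ i, (α i * ((x + z) i)^2 + β i * ((x + z) i))) + γ)
      = fun z : Euc m => A + ((∑ i, (2 * α i * x i + β i) * z i) + (∑ i, α i * (z i)^2))
    from funext hpt]
  have hint1 : IntegrableOn (fun z : Euc m => ∑ i, (2 * α i * x i + β i) * z i)
      (ball (0:Euc m) r) volume := by
    apply integrableOn_ball_cont
    exact continuous_finset_sum _ fun i _ => (continuous_const.mul (cont_coord i))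
  have hint2 : IntegrableOn (fun z : Euc m => ∑ i, α i * (z i)^2)
      (ball (0:Euc m) r) volume := by
    apply integrableOn_ball_cont
    exact continuous_finset_sum _ fun i _ => (continuous_const.mul ((cont_coord i).pow 2))
  have hconst : IntegrableOn (fun _ : Euc m => A) (ball (0:Euc m) r) volume :=
    integrableOn_const measure_ball_lt_top.ne
  have hint12 : IntegrableOn (fun z : Euc m =>
      (∑ i, (2 * α i * x i + β i) * z i) + (∑ i, α i * (z i)^2)) (ball (0:Euc m) r) volume :=
    hint1.add hint2
  rw [integral_add hconst hint12, integral_add hint1 hint2]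
  have e1 : ∫ z in ball (0:Euc m) r, (∑ i, (2 * α i * x i + β i) * z i) ∂volume = 0 := by
    rw [integral_finset_sum]
    · refine Finset.sum_eq_zero fun i _ => ?_
      rw [integral_const_mul, neg_int_coord, mul_zero]
    · exact fun i _ => (integrableOn_ball_cont (continuous_const.mul (cont_coord i)) _ _)
  have e2 : ∫ z in ball (0:Euc m) r, (∑ i, α i * (z i)^2) ∂volume = 0 := by
    rw [integral_finset_sum]
    · have : ∀ i ∈ Finset.univ, (∫ z in ball (0:Euc m) r, α i * (z i)^2 ∂volume)
          = α i * ∫ z in ball (0:Euc m) r, (z i₀)^2 ∂volume := by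
        intro i _
        rw [integral_const_mul, swap_int_sq i i₀]
      rw [Finset.sum_congr rfl this, ← Finset.sum_mul, hα, zero_mul]
    · exact fun i _ => (integrableOn_ball_cont (continuous_const.mul ((cont_coord i).pow 2)) _ _)
  rw [e1, e2, add_zero, add_zero, setIntegral_const, smul_eq_mul, mul_comm,
    Measure.addHaar_ball_center volume x, measureReal_def]

lemma setAverage_poly {m : ℕ} (i₀ : Fin m) (α β : Fin m → ℝ) (γ : ℝ)
    (hα : ∑ i, α i = 0) (x : Euc m) (r : ℝ) (hr : 0 < r) :
    ⨍ Y in ball x r, ((∑ i, (α i * (Y i)^2 + β i * (Y i))) + γ) ∂volume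
      = (∑ i, (α i * (x i)^2 + β i * (x i))) + γ := by
  rw [setAverage_eq, setIntegral_poly i₀ α β γ hα, smul_eq_mul, measureReal_def]
  have h1 : (volume (ball x r)).toReal ≠ 0 := by
    have := measure_ball_pos volume x hr
    have h2 : volume (ball x r) < ⊤ := measure_ball_lt_top
    simp [ENNReal.toReal_eq_zero_iff, this.ne', h2.ne]
  field_simp

lemma norm_sq_sum {m : ℕ} (x : Euc m) : ‖x‖^2 = ∑ i, (x i)^2 := by
  rw [EuclideanSpace.norm_eq, Real.sq_sqrt (by positivity)]
  simp [Real.norm_eq_abs, sq_abs]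

lemma abs_coord_le {m : ℕ} (x : Euc m) (i : Fin m) : |x i| ≤ ‖x‖ := by
  have h1 : (x i)^2 ≤ ‖x‖^2 := by
    rw [norm_sq_sum]
    exact Finset.single_le_sum (fun j _ => sq_nonneg (x j)) (Finset.mem_univ i)
  calc |x i| = Real.sqrt ((x i)^2) := (Real.sqrt_sq_eq_abs _).symm
    _ ≤ Real.sqrt (‖x‖^2) := Real.sqrt_le_sqrt h1
    _ = ‖x‖ := by rw [Real.sqrt_sq (norm_nonneg x)]

lemma setAverage_add_cont {m : ℕ} {f g : Euc m → ℝ} (hf : Continuous f) (hg : Continuous g)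
    (x : Euc m) (r : ℝ) :
    ⨍ y in ball x r, (f y + g y) ∂volume
      = (⨍ y in ball x r, f y ∂volume) + ⨍ y in ball x r, g y ∂volume := by
  rw [setAverage_eq, setAverage_eq, setAverage_eq,
    integral_add (integrableOn_ball_cont hf x r) (integrableOn_ball_cont hg x r),
    smul_eq_mul, smul_eq_mul, smul_eq_mul, mul_add]

lemma exists_boundary_max {m : ℕ} [NeZero m] {R : ℝ}
    (w : Euc m → ℝ) (hw : Continuous w) (O : Set (Euc m)) (hO : IsOpen O)
    (hOb : O ⊆ ball (0:Euc m) R)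
    (hMV : ∀ x ρ, 0 < ρ → closedBall x ρ ⊆ O → (⨍ y in ball x ρ, w y ∂volume) = w x)
    (ξ : Euc m) (hξ : ξ ∈ O) :
    ∃ z ∈ closure O, z ∉ O ∧ w ξ ≤ w z := by
  set K := closure O with hK
  have hKcomp : IsCompact K :=
    (isCompact_closedBall (0:Euc m) R).closure_of_subset
      (hOb.trans ball_subset_closedBall)
  have hOK : O ⊆ K := subset_closure
  obtain ⟨z₀, hz₀K, hz₀max⟩ := hKcomp.exists_isMaxOn ⟨ξ, hOK hξ⟩ hw.continuousOn
  set M := w z₀ with hM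
  set F := K ∩ {x | w x = M} with hF
  have hFcomp : IsCompact F := hKcomp.inter_right (isClosed_eq hw continuous_const)
  obtain ⟨z, hzF, hznorm⟩ := hFcomp.exists_isMaxOn ⟨z₀, hz₀K, rfl⟩ continuous_norm.continuousOn
  obtain ⟨hzK, hzM⟩ := hzF
  have hzO : z ∉ O := by
    intro hzO
    obtain ⟨ε, hε, hball⟩ := (Metric.isOpen_iff.1 hO) z hzO
    set ρ := ε / 2 with hρdef
    have hρ : 0 < ρ := by positivity
    have hcb : closedBall z ρ ⊆ O := fun y hy =>
      hball (lt_of_le_of_lt (mem_closedBall.1 hy) (by linarith))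
    have hbK : ball z ρ ⊆ K := (hcb.trans hOK).trans' ball_subset_closedBall
    have havg : (⨍ y in ball z ρ, w y ∂volume) = M := by
      rw [hMV z ρ hρ hcb, ← hzM]
    have hvolpos : 0 < (volume (ball z ρ)).toReal :=
      ENNReal.toReal_pos (measure_ball_pos volume z hρ).ne' measure_ball_lt_top.ne
    have hint : IntegrableOn w (ball z ρ) volume := integrableOn_ball_cont hw z ρ
    have hIw : ∫ y in ball z ρ, w y ∂volume = M * (volume (ball z ρ)).toReal := by
      rw [setAverage_eq, smul_eq_mul, measureReal_def] at havg
      field_simp at havg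
      linarith [havg]
    have hzero : ∫ y in ball z ρ, (M - w y) ∂volume = 0 := by
      rw [integral_sub (show IntegrableOn (fun _ => M) (ball z ρ) volume from
          integrableOn_const measure_ball_lt_top.ne) hint,
        setIntegral_const, smul_eq_mul, measureReal_def, hIw]
      ring
    have hnonneg : 0 ≤ᵐ[volume.restrict (ball z ρ)] fun y => M - w y := by
      filter_upwards [ae_restrict_mem measurableSet_ball] with y hy
      have : w y ≤ M := hz₀max (hbK hy)
      simp only [Pi.zero_apply]
      linarith
    have hintsub : Integrable (fun y => M - w y) (volume.restrict (ball z ρ)) :=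
      (integrableOn_const measure_ball_lt_top.ne).sub hint
    have hae : (fun y => M - w y) =ᵐ[volume.restrict (ball z ρ)] 0 :=
      (integral_eq_zero_iff_of_nonneg_ae hnonneg hintsub).1 hzero
    -- find a point with strictly bigger norm where w = M
    set O' := ball z ρ ∩ {y : Euc m | ‖z‖ < ‖y‖} with hO'
    have hO'open : IsOpen O' := isOpen_ball.inter (isOpen_lt continuous_const continuous_norm)
    have hO'ne : O'.Nonempty := by
      by_cases hz0 : z = 0
      · refine ⟨EuclideanSpace.single ⟨0, Nat.pos_of_ne_zero (NeZero.ne m)⟩ (ρ/2), ?_, ?_⟩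
        · rw [mem_ball, hz0, dist_zero_right, EuclideanSpace.norm_single,
            Real.norm_eq_abs, abs_of_pos (by positivity)]
          linarith
        · rw [Set.mem_setOf_eq, hz0, norm_zero, EuclideanSpace.norm_single,
            Real.norm_eq_abs, abs_of_pos (by positivity)]
          positivity
      · refine ⟨z + (ρ/(2*‖z‖)) • z, ?_, ?_⟩
        · rw [mem_ball, dist_eq_norm]
          have hnz : 0 < ‖z‖ := norm_pos_iff.2 hz0
          have : ‖z + (ρ/(2*‖z‖)) • z - z‖ = ρ/2 := by
            rw [add_sub_cancel_left, norm_smul, Real.norm_eq_abs,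
              abs_of_pos (by positivity)]
            field_simp
          rw [this]; linarith
        · rw [Set.mem_setOf_eq]
          have hnz : 0 < ‖z‖ := norm_pos_iff.2 hz0
          have : z + (ρ/(2*‖z‖)) • z = (1 + ρ/(2*‖z‖)) • z := by
            rw [add_smul, one_smul]
          rw [this, norm_smul, Real.norm_eq_abs, abs_of_pos (by positivity)]
          have ht : 0 < ρ/(2*‖z‖) := by positivity
          nlinarith [mul_pos ht hnz]
    have hO'pos : 0 < volume O' := hO'open.measure_pos volume hO'ne
    have hbad : volume ({y | (fun y => M - w y) y ≠ 0} ∩ ball z ρ) = 0 := by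
      have := ae_iff.1 hae
      rwa [Measure.restrict_apply₀'] at this
      · exact measurableSet_ball.nullMeasurableSet
    have hexists : ∃ y' ∈ O', w y' = M := by
      by_contra hcon
      push_neg at hcon
      have hsub : O' ⊆ {y | (fun y => M - w y) y ≠ 0} ∩ ball z ρ := by
        intro y hy
        refine ⟨?_, hy.1⟩
        have := hcon y hy
        simp only [Set.mem_setOf_eq]
        intro h0
        exact this (by linarith)
      exact absurd (measure_mono_null hsub hbad) hO'pos.ne'
    obtain ⟨y', hy'O', hy'M⟩ := hexists
    have hy'F : y' ∈ F := ⟨hbK hy'O'.1, hy'M⟩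
    have hle : ‖y'‖ ≤ ‖z‖ := hznorm hy'F
    exact absurd hle (not_le.2 hy'O'.2)
  exact ⟨z, hzK, hzO, hzM ▸ hz₀max (hOK hξ)⟩


end Aux

theorem thickened_ellipsoid_bounds (d : ℕ) (hd : 2 ≤ d)
    (a : Fin d → ℝ) (ha : ∀ j, 0 < a j) (hsum : ∑ j, a j = 1) :
    ∃ R₀ : ℝ, 0 < R₀ ∧
      ∀ (n : ℕ), 1 < n →
      ∀ (U : Euc (d+1) → ℝ) (Eset : Set (Euc (d+1))),
        IsObstacleSolution d U →
        Eset = {X | U X = 0} →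
        (∃ ℓ : Fin (d+1) → ℝ, (∀ i, 0 < ℓ i) ∧
          Eset = {X : Euc (d+1) | (∑ i : Fin (d+1), (X i)^2 / (ℓ i)^2) ≤ 1}) →
        (∀ X : Euc (d+1),
          U X = (X (Fin.last d))^2 / 2
            + (1 / (n:ℝ)) * ((1/2) * (∑ j : Fin d, a j * (X (Fin.castSucc j))^2)
                - (1/2) * (X (Fin.last d))^2)
            - 1 / (n:ℝ) + newtonPot d Eset X) →
        (Eset ⊆ {X : Euc (d+1) | |X (Fin.last d)| ≤ 2 / Real.sqrt n} ∧
          Eset ⊆ ball (0 : Euc (d+1)) R₀ ∧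
          (ball (0 : Euc (d+1)) (1/(8*R₀)) ∩ {X : Euc (d+1) | X (Fin.last d) = 0}) ⊆ Eset) := by
  classical
  have hd1 : (1:ℝ) ≤ (d:ℝ) := by exact_mod_cast Nat.one_le_of_lt hd
  have hd2 : (2:ℝ) ≤ (d:ℝ) := by exact_mod_cast hd
  set A := ∑ j, 2 / a j with hAdef
  have hA0 : 0 ≤ A := Finset.sum_nonneg fun j _ => div_nonneg (by norm_num) (ha j).le
  set R₀ := Real.sqrt (A + 2) + 1 with hR₀def
  have hs0 : 0 ≤ Real.sqrt (A + 2) := Real.sqrt_nonneg _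
  have hR₀1 : 1 ≤ R₀ := by rw [hR₀def]; linarith
  have hR₀pos : 0 < R₀ := by linarith
  refine ⟨R₀, hR₀pos, ?_⟩
  intro n hn U Eset hU hEdef hEll hform
  obtain ⟨hUcontOn, hUnn', hUsub, hUsuper, hUharm⟩ := hU
  have hUcont : Continuous U := continuousOn_univ.1 hUcontOn
  have hUnn : ∀ X, 0 ≤ U X := fun X => hUnn' X (Set.mem_univ X)
  set p := 1/(n:ℝ) with hpdef
  have hn2 : (2:ℝ) ≤ (n:ℝ) := by exact_mod_cast hn
  have hnpos : (0:ℝ) < n := by linarith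
  have hp_pos : 0 < p := by rw [hpdef]; positivity
  have hp_half : p ≤ 1/2 := by
    rw [hpdef, div_le_div_iff₀ hnpos (by norm_num)]; linarith
  obtain ⟨ℓ, hℓpos, hEll⟩ := hEll
  have hmeas : MeasurableSet Eset := by
    rw [hEll]
    exact (isClosed_le (continuous_finset_sum _ fun i _ =>
      ((cont_coord i).pow 2).div_const _) continuous_const).measurableSet
  have hpotnn : ∀ X, 0 ≤ newtonPot d Eset X := by
    intro X
    apply mul_nonneg
    · exact one_div_nonneg.2 (mul_nonneg (mul_nonneg (by linarith) (by linarith))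
        ENNReal.toReal_nonneg)
    · exact setIntegral_nonneg hmeas fun Y _ => Real.rpow_nonneg (norm_nonneg _) _
  -- key bounds for contact points
  have hkey : ∀ X ∈ Eset, (X (Fin.last d))^2 ≤ 4 * p ∧
      (∑ j : Fin d, a j * (X (Fin.castSucc j))^2) ≤ 2 := by
    intro X hX
    have hUX : U X = 0 := by rw [hEdef] at hX; exact hX
    have heq := hform X
    rw [hUX] at heq
    set y := X (Fin.last d) with hy
    set S := ∑ j : Fin d, a j * (X (Fin.castSucc j))^2 with hSdef
    have hS0 : 0 ≤ S := Finset.sum_nonneg fun j _ => mul_nonneg (ha j).le (sq_nonneg _)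
    have hpot := hpotnn X
    constructor
    · nlinarith [mul_nonneg (sq_nonneg y) (by linarith : (0:ℝ) ≤ 1/2 - p),
        mul_nonneg hp_pos.le hS0]
    · by_contra hcon
      push_neg at hcon
      nlinarith [mul_nonneg (sq_nonneg y) (by linarith : (0:ℝ) ≤ 1 - p),
        mul_pos hp_pos (by linarith : (0:ℝ) < S - 2)]
  -- conclusion 1
  have hC1 : Eset ⊆ {X : Euc (d+1) | |X (Fin.last d)| ≤ 2 / Real.sqrt n} := by
    intro X hX
    obtain ⟨h1, _⟩ := hkey X hX
    have hsq : (2 / Real.sqrt n)^2 = 4 * p := by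
      rw [div_pow, Real.sq_sqrt hnpos.le, hpdef]; ring
    have hb : 0 ≤ 2 / Real.sqrt n := by positivity
    show |X (Fin.last d)| ≤ 2 / Real.sqrt n
    rw [← Real.sqrt_sq_eq_abs, ← Real.sqrt_sq hb]
    exact Real.sqrt_le_sqrt (by rw [hsq]; exact h1)
  -- conclusion 2
  have hnormsq : ∀ X ∈ Eset, ‖X‖^2 ≤ A + 2 := by
    intro X hX
    obtain ⟨h1, h2⟩ := hkey X hX
    have hS : ∀ j : Fin d, (X (Fin.castSucc j))^2 ≤ 2 / a j := by
      intro j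
      have h3 : a j * (X (Fin.castSucc j))^2 ≤ 2 :=
        le_trans (Finset.single_le_sum (f := fun j : Fin d => a j * (X (Fin.castSucc j))^2)
          (fun j _ => mul_nonneg (ha j).le (sq_nonneg _)) (Finset.mem_univ j)) h2
      rw [le_div_iff₀ (ha j)]
      nlinarith
    rw [norm_sq_sum, Fin.sum_univ_castSucc]
    have hsum2 : ∑ j : Fin d, (X (Fin.castSucc j))^2 ≤ A :=
      Finset.sum_le_sum fun j _ => hS j
    have hlast : (X (Fin.last d))^2 ≤ 2 := by linarith
    linarith
  have hC2 : Eset ⊆ ball (0 : Euc (d+1)) R₀ := by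
    intro X hX
    rw [mem_ball, dist_zero_right]
    have h2 : ‖X‖ ≤ Real.sqrt (A + 2) := by
      rw [← Real.sqrt_sq (norm_nonneg X)]
      exact Real.sqrt_le_sqrt (hnormsq X hX)
    linarith
  refine ⟨hC1, hC2, ?_⟩
  -- potential at the origin
  have h0coord : ∀ i : Fin (d+1), (0 : Euc (d+1)) i = 0 := fun i => rfl
  have h0mem : (0 : Euc (d+1)) ∈ Eset := by
    rw [hEll]
    simp only [Set.mem_setOf_eq, h0coord]
    simp
  have hU0 : U 0 = 0 := by
    have := h0mem; rw [hEdef] at this; exact this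
  have hpot0 : newtonPot d Eset 0 = p := by
    have heq := hform 0
    simp only [h0coord, hU0] at heq
    simp at heq
    linarith [heq]
  set cD := (1 / (((d:ℝ)+1) * ((d:ℝ)-1) * (volume (ball (0 : Euc (d+1)) 1)).toReal)) with hcDdef
  have hcDpos : 0 < cD := by
    rw [hcDdef]
    apply one_div_pos.2
    apply mul_pos (mul_pos (by linarith) (by linarith))
    exact ENNReal.toReal_pos (measure_ball_pos volume _ one_pos).ne' measure_ball_lt_top.ne
  have hpotdef : ∀ X, newtonPot d Eset X
      = cD * ∫ Y in Eset, ‖X - Y‖ ^ ((1:ℝ) - (d:ℝ)) ∂volume := fun X => rfl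
  have hI0 : ∫ Y in Eset, ‖(0:Euc (d+1)) - Y‖ ^ ((1:ℝ)-(d:ℝ)) ∂volume = p / cD := by
    have := hpot0
    rw [hpotdef 0] at this
    field_simp at this ⊢
    linarith [this]
  have hIint : IntegrableOn (fun Y => ‖(0:Euc (d+1)) - Y‖ ^ ((1:ℝ)-(d:ℝ))) Eset volume := by
    by_contra hcon
    rw [integral_undef hcon] at hI0
    exact absurd hI0.symm (div_pos hp_pos hcDpos).ne'
  have hvolfin : volume Eset < ⊤ := lt_of_le_of_lt (measure_mono hC2) measure_ball_lt_top
  set VE := (volume Eset).toReal with hVEdef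
  have hVE0 : 0 ≤ VE := ENNReal.toReal_nonneg
  have hvolbound : R₀ ^ ((1:ℝ)-(d:ℝ)) * VE ≤ p / cD := by
    have hsetae : (Eset \ {(0:Euc (d+1))} : Set (Euc (d+1))) =ᵐ[volume] (Eset : Set (Euc (d+1))) :=
      diff_ae_eq_self.2 (measure_mono_null Set.inter_subset_right (measure_singleton 0))
    have hint' : ∫ Y in Eset \ {(0:Euc (d+1))}, ‖(0:Euc (d+1)) - Y‖ ^ ((1:ℝ)-(d:ℝ)) ∂volume
        = ∫ Y in Eset, ‖(0:Euc (d+1)) - Y‖ ^ ((1:ℝ)-(d:ℝ)) ∂volume :=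
      setIntegral_congr_set hsetae
    have hlow : ∀ Y ∈ Eset \ {(0:Euc (d+1))},
        R₀ ^ ((1:ℝ)-(d:ℝ)) ≤ ‖(0:Euc (d+1)) - Y‖ ^ ((1:ℝ)-(d:ℝ)) := by
      intro Y hY
      have hY0 : Y ≠ 0 := hY.2
      have hnp : 0 < ‖Y‖ := norm_pos_iff.2 hY0
      have hle : ‖Y‖ ≤ R₀ := by
        have := hC2 hY.1
        rw [mem_ball, dist_zero_right] at this
        linarith
      rw [zero_sub, norm_neg]
      exact Real.rpow_le_rpow_of_nonpos hnp hle (by linarith)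
    calc R₀ ^ ((1:ℝ)-(d:ℝ)) * VE
        = ∫ _ in Eset \ {(0:Euc (d+1))}, R₀ ^ ((1:ℝ)-(d:ℝ)) ∂volume := by
          rw [setIntegral_const, smul_eq_mul, measureReal_def, measure_diff_null (measure_singleton _), ← hVEdef,
            mul_comm]
      _ ≤ ∫ Y in Eset \ {(0:Euc (d+1))}, ‖(0:Euc (d+1)) - Y‖ ^ ((1:ℝ)-(d:ℝ)) ∂volume := by
          apply setIntegral_mono_on (integrableOn_const
            (lt_of_le_of_lt (measure_mono Set.diff_subset) hvolfin).ne)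
            (hIint.mono_set Set.diff_subset)
            (hmeas.diff (measurableSet_singleton _)) hlow
      _ = ∫ Y in Eset, ‖(0:Euc (d+1)) - Y‖ ^ ((1:ℝ)-(d:ℝ)) ∂volume := hint'
      _ = p / cD := hI0
  have hdecay : ∀ X : Euc (d+1), 3*R₀ ≤ ‖X‖ → newtonPot d Eset X ≤ p/2 := by
    intro X hX
    have hbound : ∫ Y in Eset, ‖X - Y‖ ^ ((1:ℝ)-(d:ℝ)) ∂volume
        ≤ (2*R₀) ^ ((1:ℝ)-(d:ℝ)) * VE := by
      by_cases hI : IntegrableOn (fun Y => ‖X - Y‖ ^ ((1:ℝ)-(d:ℝ))) Eset volume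
      · calc ∫ Y in Eset, ‖X - Y‖ ^ ((1:ℝ)-(d:ℝ)) ∂volume
            ≤ ∫ _ in Eset, (2*R₀) ^ ((1:ℝ)-(d:ℝ)) ∂volume := by
              apply setIntegral_mono_on hI (integrableOn_const hvolfin.ne) hmeas
              intro Y hY
              have h1 : ‖Y‖ < R₀ := by
                have := hC2 hY; rwa [mem_ball, dist_zero_right] at this
              have h2 : 2*R₀ ≤ ‖X - Y‖ := by
                have h3 := norm_sub_norm_le X Y
                linarith
              exact Real.rpow_le_rpow_of_nonpos (by linarith) h2 (by linarith)
          _ = (2*R₀) ^ ((1:ℝ)-(d:ℝ)) * VE := by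
              rw [setIntegral_const, smul_eq_mul, measureReal_def, ← hVEdef, mul_comm]
      · rw [integral_undef hI]
        exact mul_nonneg (Real.rpow_nonneg (by linarith) _) hVE0
    have hfactor : (2*R₀) ^ ((1:ℝ)-(d:ℝ)) = 2 ^ ((1:ℝ)-(d:ℝ)) * R₀ ^ ((1:ℝ)-(d:ℝ)) :=
      Real.mul_rpow (by norm_num) hR₀pos.le
    have h2half : (2:ℝ) ^ ((1:ℝ)-(d:ℝ)) ≤ 1/2 := by
      have : (2:ℝ) ^ ((1:ℝ)-(d:ℝ)) ≤ 2 ^ (-1:ℝ) :=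
        Real.rpow_le_rpow_of_exponent_le one_le_two (by linarith)
      rw [Real.rpow_neg_one] at this
      linarith [this]
    have h2nn : (0:ℝ) ≤ (2:ℝ) ^ ((1:ℝ)-(d:ℝ)) := Real.rpow_nonneg (by norm_num) _
    calc newtonPot d Eset X = cD * ∫ Y in Eset, ‖X - Y‖ ^ ((1:ℝ)-(d:ℝ)) ∂volume := hpotdef X
      _ ≤ cD * ((2*R₀) ^ ((1:ℝ)-(d:ℝ)) * VE) := mul_le_mul_of_nonneg_left hbound hcDpos.le
      _ = 2 ^ ((1:ℝ)-(d:ℝ)) * (cD * (R₀ ^ ((1:ℝ)-(d:ℝ)) * VE)) := by rw [hfactor]; ring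
      _ ≤ 2 ^ ((1:ℝ)-(d:ℝ)) * (cD * (p / cD)) := by
          apply mul_le_mul_of_nonneg_left _ h2nn
          exact mul_le_mul_of_nonneg_left hvolbound hcDpos.le
      _ = 2 ^ ((1:ℝ)-(d:ℝ)) * p := by field_simp
      _ ≤ (1/2) * p := mul_le_mul_of_nonneg_right h2half hp_pos.le
      _ = p/2 := by ring
  -- conclusion 3
  intro ξ hξ
  obtain ⟨hξball, hξlast⟩ := hξ
  have hξlast' : ξ (Fin.last d) = 0 := hξlast
  have hξnorm : ‖ξ‖ < 1/(8*R₀) := by rwa [mem_ball, dist_zero_right] at hξball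
  rw [hEdef]
  show U ξ = 0
  by_contra hUξ
  have hUξpos : 0 < U ξ := lt_of_le_of_ne (hUnn ξ) (Ne.symm hUξ)
  set c' := 1/(2*((d:ℝ)+1)) with hc'def
  set QQ : Euc (d+1) → ℝ := fun X => (X (Fin.last d))^2/2
    + p * ((1/2) * (∑ j : Fin d, a j * (X (Fin.castSucc j) - ξ (Fin.castSucc j))^2)
      - (1/2)*(X (Fin.last d))^2) with hQQdef
  set αc : Fin (d+1) → ℝ :=
    Fin.lastCases (c' - 1/2 + p/2) (fun j => c' - p/2 * a j) with hαcdef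
  set βc : Fin (d+1) → ℝ :=
    Fin.lastCases 0 (fun j => p * a j * ξ (Fin.castSucc j)) with hβcdef
  set γc : ℝ := -(p/2) * ∑ j : Fin d, a j * (ξ (Fin.castSucc j))^2 with hγcdef
  have hαlast : αc (Fin.last d) = c' - 1/2 + p/2 := by rw [hαcdef]; simp
  have hαcast : ∀ j : Fin d, αc (Fin.castSucc j) = c' - p/2 * a j := by
    intro j; rw [hαcdef]; simp
  have hβlast : βc (Fin.last d) = 0 := by rw [hβcdef]; simp
  have hβcast : ∀ j : Fin d, βc (Fin.castSucc j) = p * a j * ξ (Fin.castSucc j) := by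
    intro j; rw [hβcdef]; simp
  have hαsum : ∑ i, αc i = 0 := by
    rw [Fin.sum_univ_castSucc]
    rw [hαlast, Finset.sum_congr rfl (fun j _ => hαcast j)]
    rw [Finset.sum_sub_distrib, Finset.sum_const, ← Finset.mul_sum, hsum]
    simp only [Finset.card_univ, Fintype.card_fin, nsmul_eq_mul]
    rw [hc'def]
    field_simp
    ring
  have hq : ∀ X : Euc (d+1), ‖X‖^2 / (2*((d:ℝ)+1)) - QQ X
      = (∑ i, (αc i * (X i)^2 + βc i * (X i))) + γc := by
    intro X
    rw [norm_sq_sum X, Fin.sum_univ_castSucc (f := fun i => (X i)^2),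
      Fin.sum_univ_castSucc (f := fun i => αc i * (X i)^2 + βc i * (X i))]
    rw [hαlast, hβlast]
    simp only [hαcast, hβcast]
    have hexp : ∑ j : Fin d, ((c' - p/2 * a j) * (X (Fin.castSucc j))^2
          + (p * a j * ξ (Fin.castSucc j)) * (X (Fin.castSucc j)))
        = ∑ j : Fin d, (c' * (X (Fin.castSucc j))^2
          - p/2 * (a j * (X (Fin.castSucc j) - ξ (Fin.castSucc j))^2)
          + p/2 * (a j * (ξ (Fin.castSucc j))^2)) :=
      Finset.sum_congr rfl fun j _ => by ring
    rw [hexp]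
    simp only [Finset.sum_add_distrib, Finset.sum_sub_distrib, ← Finset.mul_sum]
    rw [hQQdef, hγcdef, hc'def]
    field_simp
    ring
  set w : Euc (d+1) → ℝ := fun X => U X - QQ X with hwdef
  have hQQcont : Continuous QQ := by
    rw [hQQdef]
    apply Continuous.add
    · exact ((cont_coord (Fin.last d)).pow 2).div_const 2
    · apply Continuous.mul continuous_const
      apply Continuous.sub
      · exact Continuous.mul continuous_const (continuous_finset_sum _ fun j _ =>
          continuous_const.mul (((cont_coord (Fin.castSucc j)).sub continuous_const).pow 2))
      · exact Continuous.mul continuous_const ((cont_coord (Fin.last d)).pow 2)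
  have hwcont : Continuous w := hUcont.sub hQQcont
  set O : Set (Euc (d+1)) := ball (0:Euc (d+1)) (3*R₀) ∩ {X | 0 < U X} with hOdef
  have hOopen : IsOpen O := isOpen_ball.inter (isOpen_lt continuous_const hUcont)
  have hOsub : O ⊆ ball (0:Euc (d+1)) (3*R₀) := Set.inter_subset_left
  have hOpos : O ⊆ {X : Euc (d+1) | 0 < U X} := Set.inter_subset_right
  have hsmall : 1/(8*R₀) ≤ 1 := by
    rw [div_le_one (by positivity)]; linarith
  have hξO : ξ ∈ O := by
    constructor
    · rw [mem_ball, dist_zero_right]; linarith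
    · exact hUξpos
  have hMVw : ∀ x ρ, 0 < ρ → closedBall x ρ ⊆ O →
      (⨍ y in ball x ρ, w y ∂volume) = w x := by
    intro x ρ hρ hsub
    have hsub2 : closedBall x ρ ⊆ Set.univ ∩ {X : Euc (d+1) | 0 < U X} := fun y hy =>
      ⟨Set.mem_univ y, hOpos (hsub hy)⟩
    have h1 := hUharm.2 x ρ hρ hsub2
    have h2 := setAverage_poly (Fin.last d) αc βc γc hαsum x ρ hρ
    have hsplit : ∀ y : Euc (d+1), w y = (U y - ‖y‖^2 / (2*((d:ℝ)+1)))
        + ((∑ i, (αc i * (y i)^2 + βc i * (y i))) + γc) := by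
      intro y
      rw [← hq y, hwdef]
      ring
    have hpolycont : Continuous fun y : Euc (d+1) =>
        (∑ i, (αc i * (y i)^2 + βc i * (y i))) + γc := by
      apply Continuous.add _ continuous_const
      exact continuous_finset_sum _ fun i _ =>
        (continuous_const.mul ((cont_coord i).pow 2)).add (continuous_const.mul (cont_coord i))
    have hWcont : Continuous fun y : Euc (d+1) => U y - ‖y‖^2 / (2*((d:ℝ)+1)) :=
      hUcont.sub ((continuous_norm.pow 2).div_const _)
    calc ⨍ y in ball x ρ, w y ∂volume
        = ⨍ y in ball x ρ, ((U y - ‖y‖^2 / (2*((d:ℝ)+1)))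
            + ((∑ i, (αc i * (y i)^2 + βc i * (y i))) + γc)) ∂volume := by
          rw [show w = fun y => (U y - ‖y‖^2 / (2*((d:ℝ)+1)))
            + ((∑ i, (αc i * (y i)^2 + βc i * (y i))) + γc) from funext hsplit]
      _ = (⨍ y in ball x ρ, (U y - ‖y‖^2 / (2*((d:ℝ)+1))) ∂volume)
            + ⨍ y in ball x ρ, ((∑ i, (αc i * (y i)^2 + βc i * (y i))) + γc) ∂volume :=
          setAverage_add_cont hWcont hpolycont x ρ
      _ = (U x - ‖x‖^2 / (2*((d:ℝ)+1))) + ((∑ i, (αc i * (x i)^2 + βc i * (x i))) + γc) := by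
          rw [h1, h2]
      _ = w x := (hsplit x).symm
  haveI : NeZero (d+1) := ⟨Nat.succ_ne_zero d⟩
  obtain ⟨z, hzcl, hzO, hwle⟩ := exists_boundary_max w hwcont O hOopen hOsub hMVw ξ hξO
  have hQQξ : QQ ξ = 0 := by
    rw [hQQdef]
    simp only [hξlast', sub_self]
    simp
  have hwξ : w ξ = U ξ := by rw [hwdef]; simp [hQQξ]
  have hzball : ‖z‖ ≤ 3*R₀ := by
    have h1 : z ∈ closedBall (0:Euc (d+1)) (3*R₀) :=
      (closure_mono hOsub).trans closure_ball_subset_closedBall hzcl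
    rwa [mem_closedBall, dist_zero_right] at h1
  by_cases hznorm : ‖z‖ < 3*R₀
  · have hzU : ¬ (0 < U z) := fun h => hzO ⟨by rwa [mem_ball, dist_zero_right], h⟩
    have hUz : U z = 0 := le_antisymm (not_lt.1 hzU) (hUnn z)
    have hS'0 : 0 ≤ ∑ j : Fin d, a j * (z (Fin.castSucc j) - ξ (Fin.castSucc j))^2 :=
      Finset.sum_nonneg fun j _ => mul_nonneg (ha j).le (sq_nonneg _)
    have hQQz : 0 ≤ QQ z := by
      rw [hQQdef]
      simp only
      nlinarith [sq_nonneg (z (Fin.last d)), mul_nonneg hp_pos.le hS'0,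
        mul_nonneg (sq_nonneg (z (Fin.last d))) (by linarith : (0:ℝ) ≤ 1 - p)]
    have hwz : w z = -QQ z := by rw [hwdef]; simp [hUz]
    rw [hwξ] at hwle
    rw [hwz] at hwle
    linarith
  · have hz3 : ‖z‖ = 3*R₀ := le_antisymm hzball (not_lt.1 hznorm)
    have hpotz : newtonPot d Eset z ≤ p/2 := hdecay z (le_of_eq hz3.symm)
    have hformz := hform z
    set Sz := ∑ j : Fin d, a j * (z (Fin.castSucc j))^2 with hSzdef
    set Sξz := ∑ j : Fin d, a j * (z (Fin.castSucc j) - ξ (Fin.castSucc j))^2 with hSξzdef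
    have hwz : w z = p*(Sz/2 - Sξz/2) - p + newtonPot d Eset z := by
      rw [hwdef, hQQdef]
      simp only
      rw [hformz]
      ring
    have hcross : Sz/2 - Sξz/2 ≤ 3/8 := by
      have hrw : Sz/2 - Sξz/2 = ∑ j : Fin d,
          a j * (z (Fin.castSucc j) * ξ (Fin.castSucc j) - (ξ (Fin.castSucc j))^2/2) := by
        rw [hSzdef, hSξzdef, Finset.sum_div, Finset.sum_div, ← Finset.sum_sub_distrib]
        exact Finset.sum_congr rfl fun j _ => by ring
      rw [hrw]
      calc ∑ j : Fin d, a j * (z (Fin.castSucc j) * ξ (Fin.castSucc j)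
            - (ξ (Fin.castSucc j))^2/2)
          ≤ ∑ j : Fin d, a j * (3/8) := by
            apply Finset.sum_le_sum
            intro j _
            apply mul_le_mul_of_nonneg_left _ (ha j).le
            have h1 : |z (Fin.castSucc j)| ≤ 3*R₀ := by
              have := abs_coord_le z (Fin.castSucc j); rw [hz3] at this; exact this
            have h2 : |ξ (Fin.castSucc j)| ≤ 1/(8*R₀) :=
              (abs_coord_le ξ (Fin.castSucc j)).trans hξnorm.le
            have h3 : z (Fin.castSucc j) * ξ (Fin.castSucc j) ≤ 3/8 := by
              calc z (Fin.castSucc j) * ξ (Fin.castSucc j)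
                  ≤ |z (Fin.castSucc j) * ξ (Fin.castSucc j)| := le_abs_self _
                _ = |z (Fin.castSucc j)| * |ξ (Fin.castSucc j)| := abs_mul _ _
                _ ≤ (3*R₀) * (1/(8*R₀)) := by
                    apply mul_le_mul h1 h2 (abs_nonneg _) (by positivity)
                _ = 3/8 := by field_simp
            linarith [sq_nonneg (ξ (Fin.castSucc j))]
        _ = 3/8 := by rw [← Finset.sum_mul, hsum, one_mul]
    have hmul : p * (Sz/2 - Sξz/2) ≤ p * (3/8) :=
      mul_le_mul_of_nonneg_left hcross hp_pos.le
    have hwzneg : w z < 0 := by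
      rw [hwz]
      linarith [hpotz, hmul, hp_pos]
    rw [hwξ] at hwle
    linarith
end
end

section
/- Let d ≥ 2 and let ℓ_j > 0 for j = 1,…,d. Suppose u and ũ are global solutions of the thin obstacle problem in R^{d+1} with at most quadratic growth admitting expansions u = p − c + v and ũ = p − c̃ + ṽ, where p is a fixed quadratic harmonic polynomial even in y with {p(·,0) ≤ c} compact, c, c̃ ∈ R, and v, ṽ → 0 at infinity. If c = c̃ then u = ũ. In other words, the map sending a solution with compact contact set and at most quadratic growth to its polynomial expansion at infinity is injective. -/
open MeasureTheory Metric Filter Topology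

noncomputable section

lemma ball_integrable {d : ℕ} {w : Euc (d+1) → ℝ} (hc : Continuous w) (x : Euc (d+1)) (r : ℝ) :
    IntegrableOn w (ball x r) volume :=
  (hc.continuousOn.integrableOn_compact (isCompact_closedBall x r)).mono_set ball_subset_closedBall

lemma maxp {d : ℕ} (w : Euc (d+1) → ℝ) (hc : Continuous w)
    (ht : ∀ᶠ X in cocompact (Euc (d+1)), w X < 0)
    (hsub : ∀ x r, 0 < r → closedBall x r ⊆ {y | 0 < w y} →
      w x ≤ ⨍ y in ball x r, w y ∂volume)
    (x0 : Euc (d+1)) : w x0 ≤ 0 := by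
  classical
  by_contra hpos
  push_neg at hpos
  obtain ⟨K, hKc, hK⟩ := mem_cocompact.mp ht
  have hx0K : x0 ∈ K := by
    by_contra h
    exact absurd (hK h) (by simp; linarith)
  -- maximum over the compact set S
  set S : Set (Euc (d+1)) := K ∩ {y | w x0 ≤ w y} with hS
  have hScpt : IsCompact S := hKc.inter_right (isClosed_le continuous_const hc)
  have hSne : S.Nonempty := ⟨x0, hx0K, (le_refl (w x0) : x0 ∈ {y | w x0 ≤ w y})⟩
  obtain ⟨z, hzS, hzmax⟩ := hScpt.exists_isMaxOn hSne hc.continuousOn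
  have hzx0 : w x0 ≤ w z := hzmax ⟨hx0K, (le_refl (w x0) : x0 ∈ {y | w x0 ≤ w y})⟩
  have hMpos : 0 < w z := lt_of_lt_of_le hpos hzx0
  have hglob : ∀ y, w y ≤ w z := by
    intro y
    by_cases hy : y ∈ S
    · exact hzmax hy
    · by_cases hyK : y ∈ K
      · have : ¬ (w x0 ≤ w y) := fun h => hy ⟨hyK, h⟩
        linarith [not_le.mp this]
      · have := hK hyK; simp at this; linarith
  -- set of maximum points
  set K' : Set (Euc (d+1)) := {y | w y = w z} with hK'
  have hK'sub : K' ⊆ K := by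
    intro y hy
    by_contra h
    have := hK h; simp at this
    rw [Set.mem_setOf_eq] at hy; linarith
  have hK'cpt : IsCompact K' := hKc.of_isClosed_subset (isClosed_eq hc continuous_const) hK'sub
  obtain ⟨z₀, hz₀, hnmax⟩ := hK'cpt.exists_isMaxOn ⟨z, rfl⟩ continuous_norm.continuousOn
  have hwz₀ : w z₀ = w z := hz₀
  -- a closed ball around z₀ inside {0 < w}
  have hopen : IsOpen {y | 0 < w y} := isOpen_lt continuous_const hc
  have hmem : {y | 0 < w y} ∈ 𝓝 z₀ := hopen.mem_nhds (by simp [Set.mem_setOf_eq, hwz₀, hMpos])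
  obtain ⟨r, hr, hball⟩ := (nhds_basis_closedBall.mem_iff).mp hmem
  -- the point further out
  set e : Euc (d+1) := if z₀ = 0 then EuclideanSpace.single (0 : Fin (d+1)) (1:ℝ) else ‖z₀‖⁻¹ • z₀ with he
  set y₀ : Euc (d+1) := z₀ + (r/2) • e with hy₀
  have hey : ‖e‖ = 1 := by
    by_cases h0 : z₀ = 0
    · simp [he, h0, EuclideanSpace.norm_single]
    · simp [he, h0, norm_smul, norm_ne_zero_iff.mpr h0]
  have hny₀ : ‖y₀‖ = ‖z₀‖ + r/2 := by
    by_cases h0 : z₀ = 0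
    · have hev : e = EuclideanSpace.single (0 : Fin (d+1)) (1:ℝ) := by rw [he, if_pos h0]
      rw [hy₀, h0, hev, zero_add, norm_smul, EuclideanSpace.norm_single, norm_zero, zero_add]
      simp [Real.norm_eq_abs]
      exact hr.le
    · have hn : ‖z₀‖ ≠ 0 := norm_ne_zero_iff.mpr h0
      have hrw : y₀ = (1 + (r/2) * ‖z₀‖⁻¹) • z₀ := by
        rw [hy₀, he, if_neg h0, add_smul, one_smul, smul_smul]
      rw [hrw, norm_smul, Real.norm_eq_abs,
        abs_of_nonneg (by positivity : (0:ℝ) ≤ 1 + (r/2) * ‖z₀‖⁻¹)]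
      field_simp
  have hdisty : dist y₀ z₀ = r/2 := by
    rw [hy₀, dist_eq_norm]
    simp [norm_smul, hey]
    exact hr.le
  have hy₀ball : y₀ ∈ ball z₀ r := by
    rw [mem_ball, hdisty]; linarith
  -- the integral of g := w z - w over the ball is zero
  set V : ℝ := (volume (ball z₀ r)).toReal with hV
  have hVpos : 0 < V := ENNReal.toReal_pos (measure_ball_pos _ _ hr).ne' measure_ball_lt_top.ne
  have hInt : IntegrableOn w (ball z₀ r) volume := ball_integrable hc z₀ r
  have hIntg : IntegrableOn (fun y => w z - w y) (ball z₀ r) volume :=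
    (integrableOn_const measure_ball_lt_top.ne).sub hInt
  have hmean := hsub z₀ r hr hball
  rw [setAverage_eq] at hmean
  have hIw : V * w z ≤ ∫ y in ball z₀ r, w y ∂volume := by
    have : (w z₀ : ℝ) ≤ V⁻¹ * ∫ y in ball z₀ r, w y ∂volume := by
      simpa [smul_eq_mul, show volume.real (ball z₀ r) = V from rfl] using hmean
    rw [hwz₀] at this
    calc V * w z ≤ V * (V⁻¹ * ∫ y in ball z₀ r, w y ∂volume) :=
          mul_le_mul_of_nonneg_left this hVpos.le
      _ = ∫ y in ball z₀ r, w y ∂volume := by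
          rw [← mul_assoc, mul_inv_cancel₀ hVpos.ne', one_mul]
  have hIg : ∫ y in ball z₀ r, (w z - w y) ∂volume = 0 := by
    have h1 : ∫ y in ball z₀ r, (w z - w y) ∂volume
        = V * w z - ∫ y in ball z₀ r, w y ∂volume := by
      rw [integral_sub (integrableOn_const (C := w z) measure_ball_lt_top.ne) hInt,
        setIntegral_const, smul_eq_mul]; rfl
    have h2 : 0 ≤ ∫ y in ball z₀ r, (w z - w y) ∂volume :=
      setIntegral_nonneg measurableSet_ball (fun y _ => by linarith [hglob y])
    linarith
  -- conclude w y₀ = w z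
  have hwy₀ : w y₀ = w z := by
    by_contra h
    have hlt : w y₀ < w z := lt_of_le_of_ne (hglob y₀) h
    set δ : ℝ := w z - w y₀ with hδ
    have hδpos : 0 < δ := by linarith
    have hopen2 : IsOpen (ball z₀ r ∩ {y | δ/2 < w z - w y}) :=
      isOpen_ball.inter (isOpen_lt continuous_const (continuous_const.sub hc))
    have hy₀mem : y₀ ∈ ball z₀ r ∩ {y | δ/2 < w z - w y} :=
      ⟨hy₀ball, by rw [Set.mem_setOf_eq]; linarith⟩
    obtain ⟨s, hs, hsball⟩ := Metric.isOpen_iff.mp hopen2 y₀ hy₀mem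
    have hsub2 : ball y₀ s ⊆ ball z₀ r := hsball.trans Set.inter_subset_left
    have hVs : 0 < (volume (ball y₀ s)).toReal :=
      ENNReal.toReal_pos (measure_ball_pos _ _ hs).ne' measure_ball_lt_top.ne
    have hlow : δ/2 * (volume (ball y₀ s)).toReal
        ≤ ∫ y in ball y₀ s, (w z - w y) ∂volume := by
      apply setIntegral_ge_of_const_le_real measurableSet_ball measure_ball_lt_top.ne
      · intro y hy
        exact le_of_lt (hsball hy).2
      · exact hIntg.mono_set hsub2
    have hmono : ∫ y in ball y₀ s, (w z - w y) ∂volume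
        ≤ ∫ y in ball z₀ r, (w z - w y) ∂volume := by
      apply setIntegral_mono_set hIntg
      · exact ae_of_all _ (fun y => by simp only [Pi.zero_apply]; linarith [hglob y])
      · exact HasSubset.Subset.eventuallyLE hsub2
    nlinarith
  -- contradiction with maximality of the norm
  have : ‖y₀‖ ≤ ‖z₀‖ := hnmax hwy₀
  rw [hny₀] at this
  linarith

lemma cmp_thin {d : ℕ} {u u' : Euc (d+1) → ℝ}
    (hu : IsThinObstacleSolution d u) (hu' : IsThinObstacleSolution d u')
    (hdiff : Tendsto (fun X => u X - u' X) (cocompact (Euc (d+1))) (𝓝 0))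
    (X : Euc (d+1)) : u X ≤ u' X := by
  have key : ∀ ε : ℝ, 0 < ε → u X - u' X - ε ≤ 0 := by
    intro ε hε
    set w : Euc (d+1) → ℝ := fun Y => u Y - u' Y - ε with hw
    have hcw : Continuous w := (hu.1.sub hu'.1).sub continuous_const
    have ht : ∀ᶠ Y in cocompact (Euc (d+1)), w Y < 0 := by
      have h1 : Tendsto w (cocompact (Euc (d+1))) (𝓝 (0 - ε)) := hdiff.sub_const ε
      exact h1.eventually_lt_const (by linarith)
    refine maxp w hcw ht ?_ X
    intro x r hr hball
    -- the ball lies in the harmonicity set of u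
    have hball' : closedBall x r ⊆ {Y : Euc (d+1) | Y (Fin.last d) ≠ 0} ∪ {Y | 0 < u Y} := by
      intro y hy
      have hwy : 0 < w y := hball hy
      by_cases hy0 : y (Fin.last d) = 0
      · right
        have := hu'.2.1 y hy0
        simp only [hw, Set.mem_setOf_eq] at hwy ⊢
        linarith
      · exact Or.inl hy0
    have hmu : (⨍ y in ball x r, u y ∂volume) = u x := hu.2.2.2.2.2 x r hr hball'
    have hmu' : (⨍ y in ball x r, u' y ∂volume) ≤ u' x :=
      hu'.2.2.2.1.2 x r hr (Set.subset_univ _)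
    set V : ℝ := (volume (ball x r)).toReal with hV
    have hVpos : 0 < V := ENNReal.toReal_pos (measure_ball_pos _ _ hr).ne' measure_ball_lt_top.ne
    have hIu : IntegrableOn u (ball x r) volume := ball_integrable hu.1 x r
    have hIu' : IntegrableOn u' (ball x r) volume := ball_integrable hu'.1 x r
    have hsplit : (⨍ y in ball x r, w y ∂volume)
        = (⨍ y in ball x r, u y ∂volume) - (⨍ y in ball x r, u' y ∂volume) - ε := by
      rw [setAverage_eq, setAverage_eq, setAverage_eq]
      have : ∫ y in ball x r, w y ∂volume
          = (∫ y in ball x r, u y ∂volume) - (∫ y in ball x r, u' y ∂volume) - ε * V := by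
        have e1 : ∫ y in ball x r, (u y - u' y - ε) ∂volume
            = (∫ y in ball x r, (u y - u' y) ∂volume) - ∫ _ in ball x r, (ε:ℝ) ∂volume :=
          integral_sub (f := fun y => u y - u' y) (g := fun _ => ε)
            (hIu.sub hIu') (integrableOn_const measure_ball_lt_top.ne)
        have e2 : ∫ y in ball x r, (u y - u' y) ∂volume
            = (∫ y in ball x r, u y ∂volume) - ∫ y in ball x r, u' y ∂volume :=
          integral_sub hIu hIu'
        have e3 : ∫ _ in ball x r, (ε:ℝ) ∂volume = V * ε := by
          rw [setIntegral_const, smul_eq_mul, hV]; rfl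
        calc ∫ y in ball x r, w y ∂volume = ∫ y in ball x r, (u y - u' y - ε) ∂volume := rfl
          _ = (∫ y in ball x r, u y ∂volume) - (∫ y in ball x r, u' y ∂volume) - ε * V := by
              rw [e1, e2, e3]; ring
      rw [this, show volume.real (ball x r) = V from rfl]
      field_simp
      simp only [smul_eq_mul, one_div]
      rw [mul_sub, mul_sub, ← mul_assoc, inv_mul_cancel₀ hVpos.ne', one_mul]
    rw [hsplit, hmu]
    have : w x = u x - u' x - ε := rfl
    linarith
  by_contra h
  push_neg at h
  have := key ((u X - u' X)/2) (by linarith)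
  linarith


theorem expansion_injectivity (d : ℕ) (hd : 2 ≤ d)
    (p : MvPolynomial (Fin (d+1)) ℝ)
    (hdeg : p.totalDegree ≤ 2)
    (hharm : HarmonicOnSet (polyEval d p) Set.univ)
    (heven : ∀ X : Euc (d+1), polyEval d p (reflLast d X) = polyEval d p X)
    (c c' : ℝ)
    (hcpt : IsCompact {x : Euc d | MvPolynomial.eval (Fin.snoc (fun j => x j) 0) p ≤ c})
    (u u' : Euc (d+1) → ℝ)
    (hu : IsThinObstacleSolution d u) (hu' : IsThinObstacleSolution d u')
    (hg : QuadGrowth d u) (hg' : QuadGrowth d u')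
    (hΛ : (contactSet d u).Nonempty ∧ IsCompact (contactSet d u))
    (hΛ' : (contactSet d u').Nonempty ∧ IsCompact (contactSet d u'))
    (hv : Tendsto (fun X : Euc (d+1) => |u X - (polyEval d p X - c)|) (cocompact _) (nhds 0))
    (hv' : Tendsto (fun X : Euc (d+1) => |u' X - (polyEval d p X - c')|) (cocompact _) (nhds 0))
    (hcc : c = c') :
    u = u' := by
  subst hcc
  have hb : ∀ X : Euc (d+1), |u X - u' X|
      ≤ |u X - (polyEval d p X - c)| + |u' X - (polyEval d p X - c)| := by
    intro X
    have h : u X - u' X = (u X - (polyEval d p X - c)) - (u' X - (polyEval d p X - c)) := by ring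
    rw [h]
    exact abs_sub _ _
  have habs : Tendsto (fun X => |u X - u' X|) (cocompact (Euc (d+1))) (𝓝 0) :=
    squeeze_zero (fun X => abs_nonneg _) hb (by simpa using hv.add hv')
  have hdiff : Tendsto (fun X => u X - u' X) (cocompact (Euc (d+1))) (𝓝 0) :=
    (tendsto_zero_iff_abs_tendsto_zero _).mpr habs
  have hdiff' : Tendsto (fun X => u' X - u X) (cocompact (Euc (d+1))) (𝓝 0) := by
    have := hdiff.neg
    simpa [neg_sub] using this
  funext X
  exact le_antisymm (cmp_thin hu hu' hdiff X) (cmp_thin hu' hu hdiff' X)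
end
end
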